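/- Let (φ_N, H̄_N) solve the lattice weak KAM equation and let ν be a holonomic probability measure on Λ_N × ℝ^d with ∫ max(inf_x L(x,v), 1) ν(d(x,v)) < ∞. Then ∫_{Λ_N×ℝ^d} L(x,v) ν(d(x,v)) ≥ −H̄_N. Consequently, any holonomic measure of the form μ̂_N = ∑_x m̂_{N,x} δ_{(x,π*_N(x))} built from an optimal strategy π*_N (achieving the max in 𝓗_N(x,(−Δ_N)φ_N(x))) and a stationary distribution m̂_N is a Mather measure for Λ_N, and ∫ L dμ̂_N = −H̄_N. -/

import Mathlib

open scoped BigOperators RealInnerProductSpace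
open MeasureTheory Filter

noncomputable section

abbrev Evec (d : ℕ) := EuclideanSpace ℝ (Fin d)

def sgnz (a : ℝ) : ℤ := if 0 < a then 1 else if a < 0 then -1 else 0

def latE (d N : ℕ) (x : Fin d → ZMod N) : Evec d :=
  (WithLp.equiv 2 (Fin d → ℝ)).symm fun i => ((x i).val : ℝ) / N

def dplus {d N : ℕ} (φ : (Fin d → ZMod N) → ℝ) (x : Fin d → ZMod N) (i : Fin d) : ℝ :=
  (N : ℝ) * (φ (x + Pi.single i 1) - φ x)

def dminus {d N : ℕ} (φ : (Fin d → ZMod N) → ℝ) (x : Fin d → ZMod N) (i : Fin d) : ℝ :=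
  (N : ℝ) * (φ (x - Pi.single i 1) - φ x)

def DeltaN {d N : ℕ} (φ : (Fin d → ZMod N) → ℝ) (x : Fin d → ZMod N) : Fin d → ℝ × ℝ :=
  fun i => (dplus φ x i, dminus φ x i)

def negDeltaN {d N : ℕ} (φ : (Fin d → ZMod N) → ℝ) (x : Fin d → ZMod N) : Fin d → ℝ × ℝ :=
  fun i => (-dplus φ x i, -dminus φ x i)

def pairL {d : ℕ} (ξ : Fin d → ℝ × ℝ) (v : Evec d) : ℝ :=
  ∑ i, ((ξ i).1 * max (v i) 0 + (ξ i).2 * max (-(v i)) 0)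

def QN {d N : ℕ} (v : Evec d) (x y : Fin d → ZMod N) : ℝ :=
  (∑ i, if y = x + Pi.single i ((sgnz (v i) : ZMod N)) then (N : ℝ) * |v i| else 0)
    - (if y = x then (N : ℝ) * ∑ i, |v i| else 0)

def HNlat {d N : ℕ} (L : Evec d → Evec d → ℝ) (x : Fin d → ZMod N)
    (ξ : Fin d → ℝ × ℝ) : ℝ :=
  ⨆ v : Evec d, (pairL ξ v - L (latE d N x) v)

instance (n : ℕ) : MeasurableSpace (ZMod n) := ⊤

instance (n : ℕ) : MeasurableSingletonClass (ZMod n) :=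
  ⟨fun _ => MeasurableSpace.measurableSet_top⟩

lemma abs_coord_le_norm {d : ℕ} (v : Evec d) (i : Fin d) : |v i| ≤ ‖v‖ := by
  rw [EuclideanSpace.norm_eq]
  have h1 : |v i| = Real.sqrt (‖v i‖ ^ 2) := by
    rw [Real.sqrt_sq_eq_abs, Real.norm_eq_abs, abs_abs]
  rw [h1]
  exact Real.sqrt_le_sqrt
    (Finset.single_le_sum (f := fun j => ‖v j‖ ^ 2) (fun j _ => sq_nonneg _)
      (Finset.mem_univ i))

lemma pairL_abs_le {d : ℕ} (ξ : Fin d → ℝ × ℝ) (v : Evec d) :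
    |pairL ξ v| ≤ (∑ i, (|(ξ i).1| + |(ξ i).2|)) * ‖v‖ := by
  rw [Finset.sum_mul]
  refine (Finset.abs_sum_le_sum_abs _ _).trans (Finset.sum_le_sum fun i _ => ?_)
  have hmax1 : |max (v i) 0| ≤ ‖v‖ :=
    (abs_of_nonneg (le_max_right _ _)).le.trans
      ((max_le (le_abs_self _) (abs_nonneg _)).trans (abs_coord_le_norm v i))
  have hmax2 : |max (-(v i)) 0| ≤ ‖v‖ := by
    rw [abs_of_nonneg (le_max_right _ _)]
    refine (max_le ?_ (abs_nonneg _)).trans (abs_coord_le_norm v i)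
    rw [← abs_neg]; exact le_abs_self _
  calc |(ξ i).1 * max (v i) 0 + (ξ i).2 * max (-(v i)) 0|
      ≤ |(ξ i).1 * max (v i) 0| + |(ξ i).2 * max (-(v i)) 0| := abs_add_le _ _
    _ ≤ |(ξ i).1| * ‖v‖ + |(ξ i).2| * ‖v‖ := by
        rw [abs_mul, abs_mul]
        exact add_le_add (mul_le_mul_of_nonneg_left hmax1 (abs_nonneg _))
          (mul_le_mul_of_nonneg_left hmax2 (abs_nonneg _))
    _ = (|(ξ i).1| + |(ξ i).2|) * ‖v‖ := by ring

lemma wkam_le {d : ℕ} (L : Evec d → Evec d → ℝ) (g : ℝ → ℝ)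
    (hsl : ∀ a : ℝ, 0 ≤ a → ∀ (x v : Evec d), a * ‖v‖ + g a ≤ L x v)
    (ξ : Fin d → ℝ × ℝ) (y : Evec d) (v : Evec d) :
    pairL ξ v - L y v ≤ ⨆ w : Evec d, (pairL ξ w - L y w) := by
  set C := ∑ i, (|(ξ i).1| + |(ξ i).2|) with hC
  have hC0 : 0 ≤ C := Finset.sum_nonneg fun i _ => add_nonneg (abs_nonneg _) (abs_nonneg _)
  refine le_ciSup (f := fun w => pairL ξ w - L y w) ⟨-g C, ?_⟩ v
  rintro r ⟨w, rfl⟩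
  have h1 : pairL ξ w ≤ C * ‖w‖ := (le_abs_self _).trans (pairL_abs_le ξ w)
  have h2 := hsl C hC0 y w
  simp only
  linarith

lemma pairL_negDeltaN {d N : ℕ} [NeZero N] (φ : (Fin d → ZMod N) → ℝ) (x : Fin d → ZMod N) (v : Evec d) :
    pairL (negDeltaN φ x) v = - pairL (DeltaN φ x) v := by
  simp only [pairL, negDeltaN, DeltaN, ← Finset.sum_neg_distrib]
  exact Finset.sum_congr rfl fun i _ => by ring

lemma sum_phi_QN {d N : ℕ} [NeZero N] (φ : (Fin d → ZMod N) → ℝ) (x : Fin d → ZMod N) (v : Evec d) :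
    ∑ y, φ y * QN v x y = pairL (DeltaN φ x) v := by
  have key : ∀ i : Fin d,
      φ (x + Pi.single i ((sgnz (v i) : ZMod N))) * ((N : ℝ) * |v i|)
        - φ x * ((N : ℝ) * |v i|)
      = (N : ℝ) * (φ (x + Pi.single i 1) - φ x) * max (v i) 0
        + (N : ℝ) * (φ (x - Pi.single i 1) - φ x) * max (-(v i)) 0 := by
    intro i
    rcases lt_trichotomy (v i) 0 with h | h | h
    · have hs : sgnz (v i) = -1 := by
        unfold sgnz; rw [if_neg (by linarith), if_pos h]
      have hcast : ((sgnz (v i) : ℤ) : ZMod N) = -1 := by rw [hs]; push_cast; ring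
      rw [hcast]
      have hsingle : x + Pi.single i (-1 : ZMod N) = x - Pi.single i 1 := by
        rw [sub_eq_add_neg, ← Pi.single_neg]
      rw [hsingle, abs_of_neg h, max_eq_right h.le, max_eq_left (by linarith)]
      ring
    · have hs : sgnz (v i) = 0 := by
        unfold sgnz; rw [if_neg (by simp [h]), if_neg (by simp [h])]
      simp [hs, h]
    · have hs : sgnz (v i) = 1 := by unfold sgnz; rw [if_pos h]
      have hcast : ((sgnz (v i) : ℤ) : ZMod N) = 1 := by rw [hs]; push_cast; ring
      rw [hcast, abs_of_pos h, max_eq_left h.le, max_eq_right (by linarith)]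
      ring
  calc ∑ y, φ y * QN v x y
      = ∑ y, ((∑ i, if y = x + Pi.single i ((sgnz (v i) : ZMod N)) then
            φ y * ((N : ℝ) * |v i|) else 0)
          - (if y = x then φ y * ((N : ℝ) * ∑ i, |v i|) else 0)) := by
        refine Finset.sum_congr rfl fun y _ => ?_
        simp only [QN, mul_sub, Finset.mul_sum, mul_ite, mul_zero]
    _ = (∑ i, φ (x + Pi.single i ((sgnz (v i) : ZMod N))) * ((N : ℝ) * |v i|))
          - φ x * ((N : ℝ) * ∑ i, |v i|) := by
        rw [Finset.sum_sub_distrib, Finset.sum_comm]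
        congr 1
        · refine Finset.sum_congr rfl fun i _ => ?_
          simp [Finset.sum_ite_eq']
        · simp [Finset.sum_ite_eq']
    _ = ∑ i, (φ (x + Pi.single i ((sgnz (v i) : ZMod N))) * ((N : ℝ) * |v i|)
          - φ x * ((N : ℝ) * |v i|)) := by
        rw [Finset.sum_sub_distrib]
        congr 1
        rw [Finset.mul_sum, Finset.mul_sum]
    _ = pairL (DeltaN φ x) v := by
        rw [pairL]
        refine Finset.sum_congr rfl fun i _ => ?_
        rw [key i]
        simp [DeltaN, dplus, dminus]

/-- every holonomic probability measure `ν` on `Λ_N × ℝ^d` with finite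
integral of the weight `max(inf_x L(x,v), 1)` satisfies `∫ L dν ≥ −H̄_N`
(stated via the lower integral of the nonnegative integrand `L − g(0)`);
consequently a holonomic measure `μ̂_N = ∑_x m̂_{N,x} δ_{(x, π*_N(x))}` built from an
optimal strategy `π*_N` and a stationary distribution `m̂_N` is a Mather measure
for `Λ_N`, with `∫ L dμ̂_N = −H̄_N`. -/
theorem stmt18 (d N : ℕ) [NeZero N] (L : Evec d → Evec d → ℝ) (g : ℝ → ℝ)
    (hLc : Continuous (Function.uncurry L))
    (hconv : ∀ x : Evec d, ConvexOn ℝ Set.univ (L x))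
    (hsl : ∀ a : ℝ, 0 ≤ a → ∀ (x v : Evec d), a * ‖v‖ + g a ≤ L x v)
    (hper : ∀ (x v : Evec d) (i : Fin d), L (x + EuclideanSpace.single i 1) v = L x v)
    (φN : (Fin d → ZMod N) → ℝ) (HbarN : ℝ)
    (hKAM : ∀ x, HNlat L x (negDeltaN φN x) = HbarN)
    (m : (Fin d → ZMod N) → ℝ) (π : (Fin d → ZMod N) → Evec d)
    (hm : ∀ x, 0 ≤ m x) (hmsum : ∑ x, m x = 1)
    (hstat : ∀ y, ∑ x, m x * QN (π x) x y = 0)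
    (hopt : ∀ x, pairL (negDeltaN φN x) (π x) - L (latE d N x) (π x) = HbarN) :
    (∀ ν : Measure ((Fin d → ZMod N) × Evec d), IsProbabilityMeasure ν →
      Integrable (fun p : (Fin d → ZMod N) × Evec d =>
        max (⨅ x : Evec d, L x p.2) 1) ν →
      (∀ φ : (Fin d → ZMod N) → ℝ, ∫ p, pairL (DeltaN φ p.1) p.2 ∂ν = 0) →
      ENNReal.ofReal (-HbarN - g 0)
        ≤ ∫⁻ p, ENNReal.ofReal (L (latE d N p.1) p.2 - g 0) ∂ν) ∧
    ∑ x, m x * L (latE d N x) (π x) = -HbarN := by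
  -- pointwise weak KAM inequality
  have hwk : ∀ (x : Fin d → ZMod N) (v : Evec d),
      -HbarN - pairL (DeltaN φN x) v ≤ L (latE d N x) v := by
    intro x v
    have h := (wkam_le L g hsl (negDeltaN φN x) (latE d N x) v).trans_eq (hKAM x)
    rw [pairL_negDeltaN] at h
    linarith
  constructor
  · intro ν hprob hInt hhol
    -- nonnegativity of the integrand
    have hf0 : ∀ p : (Fin d → ZMod N) × Evec d, 0 ≤ L (latE d N p.1) p.2 - g 0 := by
      intro p
      have := hsl 0 le_rfl (latE d N p.1) p.2
      simpa using by linarith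
    by_cases hfin : (∫⁻ p, ENNReal.ofReal (L (latE d N p.1) p.2 - g 0) ∂ν) = ⊤
    · rw [hfin]; exact le_top
    -- measurability of the integrand
    have hmeas : Measurable fun p : (Fin d → ZMod N) × Evec d =>
        L (latE d N p.1) p.2 - g 0 := by
      have h1 : Measurable fun p : (Fin d → ZMod N) × Evec d => (latE d N p.1, p.2) :=
        ((measurable_of_countable (latE d N)).comp measurable_fst).prodMk measurable_snd
      exact (hLc.measurable.comp h1).sub measurable_const
    -- integrability of the integrand
    have hfint : Integrable (fun p : (Fin d → ZMod N) × Evec d =>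
        L (latE d N p.1) p.2 - g 0) ν := by
      refine ⟨hmeas.aestronglyMeasurable, ?_⟩
      rw [hasFiniteIntegral_iff_ofReal (Eventually.of_forall hf0)]
      exact lt_top_iff_ne_top.mpr hfin
    -- integrability of the norm
    have hnormint : Integrable (fun p : (Fin d → ZMod N) × Evec d => ‖p.2‖) ν := by
      refine Integrable.mono (hInt.sub (integrable_const (g 1)))
        (continuous_norm.comp continuous_snd).measurable.aestronglyMeasurable
        (Eventually.of_forall fun p => ?_)
      have hlow : (1 : ℝ) * ‖p.2‖ + g 1 ≤ ⨅ x : Evec d, L x p.2 := by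
        refine le_ciInf fun x => hsl 1 zero_le_one x p.2
      have h1 : ‖p.2‖ ≤ max (⨅ x : Evec d, L x p.2) 1 - g 1 := by
        have := le_max_left (⨅ x : Evec d, L x p.2) 1
        linarith
      have h2 : 0 ≤ max (⨅ x : Evec d, L x p.2) 1 - g 1 := (norm_nonneg _).trans h1
      simp only [Pi.sub_apply, Real.norm_eq_abs, abs_norm]
      rw [abs_of_nonneg h2]
      exact h1
    -- integrability of the pairL term
    set C : ℝ := ∑ x : Fin d → ZMod N, ∑ i, (|(DeltaN φN x i).1| + |(DeltaN φN x i).2|)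
      with hCdef
    have hCx : ∀ x : Fin d → ZMod N,
        (∑ i, (|(DeltaN φN x i).1| + |(DeltaN φN x i).2|)) ≤ C := by
      intro x
      exact Finset.single_le_sum
        (f := fun x => ∑ i, (|(DeltaN φN x i).1| + |(DeltaN φN x i).2|))
        (fun x _ => Finset.sum_nonneg fun i _ => add_nonneg (abs_nonneg _) (abs_nonneg _))
        (Finset.mem_univ x)
    have hC0 : 0 ≤ C := Finset.sum_nonneg fun x _ =>
      Finset.sum_nonneg fun i _ => add_nonneg (abs_nonneg _) (abs_nonneg _)
    have hpmeas : Measurable fun p : (Fin d → ZMod N) × Evec d =>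
        pairL (DeltaN φN p.1) p.2 := by
      have hcont : Continuous fun q : (Fin d → ℝ × ℝ) × Evec d => pairL q.1 q.2 := by
        unfold pairL
        refine continuous_finset_sum _ fun i _ => ?_
        have hv : Continuous fun q : (Fin d → ℝ × ℝ) × Evec d => q.2 i := by fun_prop
        have hx1 : Continuous fun q : (Fin d → ℝ × ℝ) × Evec d => (q.1 i).1 := by fun_prop
        have hx2 : Continuous fun q : (Fin d → ℝ × ℝ) × Evec d => (q.1 i).2 := by fun_prop
        exact (hx1.mul (hv.max continuous_const)).add
          (hx2.mul ((hv.neg).max continuous_const))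
      have h1 : Measurable fun p : (Fin d → ZMod N) × Evec d =>
          ((DeltaN φN p.1 : Fin d → ℝ × ℝ), p.2) :=
        ((measurable_of_countable (DeltaN φN)).comp measurable_fst).prodMk measurable_snd
      exact hcont.measurable.comp h1
    have hpint : Integrable (fun p : (Fin d → ZMod N) × Evec d =>
        pairL (DeltaN φN p.1) p.2) ν := by
      refine Integrable.mono (hnormint.const_mul C) hpmeas.aestronglyMeasurable
        (Eventually.of_forall fun p => ?_)
      rw [Real.norm_eq_abs, Real.norm_eq_abs, abs_of_nonneg (mul_nonneg hC0 (norm_nonneg _))]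
      exact (pairL_abs_le _ _).trans
        (mul_le_mul_of_nonneg_right (hCx p.1) (norm_nonneg _))
    -- main integral inequality
    have hmono : -HbarN - g 0
        ≤ ∫ p, (L (latE d N p.1) p.2 - g 0) ∂ν := by
      have hpt : ∀ p : (Fin d → ZMod N) × Evec d,
          (-HbarN - g 0) - pairL (DeltaN φN p.1) p.2 ≤ L (latE d N p.1) p.2 - g 0 := by
        intro p
        have := hwk p.1 p.2
        linarith
      have hIsub : Integrable (fun p : (Fin d → ZMod N) × Evec d =>
          (-HbarN - g 0) - pairL (DeltaN φN p.1) p.2) ν := (integrable_const _).sub hpint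
      have := integral_mono hIsub hfint hpt
      rwa [integral_sub (integrable_const _) hpint, hhol φN,
        integral_const, probReal_univ, smul_eq_mul, one_mul,
        sub_zero] at this
    calc ENNReal.ofReal (-HbarN - g 0)
        ≤ ENNReal.ofReal (∫ p, (L (latE d N p.1) p.2 - g 0) ∂ν) :=
          ENNReal.ofReal_le_ofReal hmono
      _ = ∫⁻ p, ENNReal.ofReal (L (latE d N p.1) p.2 - g 0) ∂ν :=
          ofReal_integral_eq_lintegral_ofReal hfint (Eventually.of_forall hf0)
  · -- discrete Mather measure part
    have hzero : ∑ x, m x * pairL (DeltaN φN x) (π x) = 0 := by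
      calc ∑ x, m x * pairL (DeltaN φN x) (π x)
          = ∑ x, ∑ y, φN y * (m x * QN (π x) x y) := by
            refine Finset.sum_congr rfl fun x _ => ?_
            rw [← sum_phi_QN φN x (π x), Finset.mul_sum]
            exact Finset.sum_congr rfl fun y _ => by ring
        _ = ∑ y, φN y * ∑ x, m x * QN (π x) x y := by
            rw [Finset.sum_comm]
            exact Finset.sum_congr rfl fun y _ => by rw [Finset.mul_sum]
        _ = 0 := by simp [hstat]
    have hLx : ∀ x, L (latE d N x) (π x) = - pairL (DeltaN φN x) (π x) - HbarN := by
      intro x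
      have h := hopt x
      rw [pairL_negDeltaN] at h
      linarith
    calc ∑ x, m x * L (latE d N x) (π x)
        = ∑ x, (-(m x * pairL (DeltaN φN x) (π x)) - m x * HbarN) := by
          refine Finset.sum_congr rfl fun x _ => ?_
          rw [hLx x]; ring
      _ = -HbarN := by
          rw [Finset.sum_sub_distrib, Finset.sum_neg_distrib, hzero, ← Finset.sum_mul, hmsum]
          ring
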